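/- Let M be a Krull–Schmidt k-linear category over a field k, let 1 be an object with End(1) ≅ k, and let Z, Z' be indecomposable objects of M with M(1,Z) ≠ 0 and M(1,Z') ≠ 0. Suppose M(1,Z) is a simple module over End(Z) and M(1,Z') is a simple module over End(Z'). If the trace submodules Tr_Z M_1 and Tr_{Z'} M_1 coincide, then Z ≅ Z'. (Here Tr_S M_1(X) is the span of all composites 1 → W → X with W ∈ S.) -/
import Mathlib

open CategoryTheory Limits

lemma factor_of_span {k : Type*} [Field k] {C : Type*} [Category C] [Preadditive C]
    [Linear k C] {one A B : C} (f' : one ⟶ A)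
    (hsimp : ∀ g : one ⟶ A, ∃ e : A ⟶ A, g = f' ≫ e)
    {x : one ⟶ B}
    (hx : x ∈ Submodule.span k {f : one ⟶ B | ∃ (g : one ⟶ A) (h : A ⟶ B), f = g ≫ h}) :
    ∃ u : A ⟶ B, x = f' ≫ u := by
  refine Submodule.span_induction ?_ ?_ ?_ ?_ hx
  · rintro y ⟨g, h, rfl⟩
    obtain ⟨e, rfl⟩ := hsimp g
    exact ⟨e ≫ h, by simp⟩
  · exact ⟨0, by simp⟩
  · rintro a b _ _ ⟨u, rfl⟩ ⟨v, rfl⟩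
    exact ⟨u + v, by simp [Preadditive.comp_add]⟩
  · rintro c a _ ⟨u, rfl⟩
    exact ⟨c • u, by rw [Linear.comp_smul]⟩

/-- **Distinct trace submodules.**  Let `M` be a Krull–Schmidt `k`-linear category over
a field `k` (every object is a finite biproduct of objects with local endomorphism
rings), with an object `𝟙` whose endomorphism ring is `k`.  Let `Z, Z'` be
indecomposable objects (hence with local endomorphism rings) admitting nonzero morphisms
from `𝟙`, such that `M(𝟙,Z)` is a simple `End(Z)`-module and `M(𝟙,Z')` is a simple
`End(Z')`-module.  If the trace submodules `Tr_Z M_𝟙` and `Tr_{Z'} M_𝟙` of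
`M_𝟙 = ⊕_X M(𝟙,X)` coincide, then `Z ≅ Z'`. -/
theorem trace_submodule_eq_iff_iso
    (k : Type*) [Field k] (C : Type*) [Category C] [Preadditive C] [Linear k C]
    [HasFiniteBiproducts C] [HasBinaryBiproducts C]
    (one : C) (hone : ∀ f : one ⟶ one, ∃ c : k, f = c • 𝟙 one)
    (hKS : ∀ X : C, ∃ (n : ℕ) (D : Fin n → C),
      (∀ i, IsLocalRing (End (D i))) ∧ Nonempty (X ≅ ⨁ D))
    (Z Z' : C)
    (hZind : ¬ IsZero Z ∧ ∀ Y W : C, Nonempty (Z ≅ Y ⊞ W) → IsZero Y ∨ IsZero W)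
    (hZ'ind : ¬ IsZero Z' ∧ ∀ Y W : C, Nonempty (Z' ≅ Y ⊞ W) → IsZero Y ∨ IsZero W)
    (hZloc : IsLocalRing (End Z)) (hZ'loc : IsLocalRing (End Z'))
    (hZne : ∃ f : one ⟶ Z, f ≠ 0) (hZ'ne : ∃ f : one ⟶ Z', f ≠ 0)
    (hZsimple : ∀ f : one ⟶ Z, f ≠ 0 → ∀ g : one ⟶ Z, ∃ e : Z ⟶ Z, g = f ≫ e)
    (hZ'simple : ∀ f : one ⟶ Z', f ≠ 0 → ∀ g : one ⟶ Z', ∃ e : Z' ⟶ Z', g = f ≫ e)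
    (htr : ∀ X : C,
      Submodule.span k {f : one ⟶ X | ∃ (g : one ⟶ Z) (h : Z ⟶ X), f = g ≫ h} =
      Submodule.span k {f : one ⟶ X | ∃ (g : one ⟶ Z') (h : Z' ⟶ X), f = g ≫ h}) :
    Nonempty (Z ≅ Z') := by
  obtain ⟨f, hf⟩ := hZne
  obtain ⟨f', hf'⟩ := hZ'ne
  -- f factors through Z'
  have hfmem : f ∈ Submodule.span k
      {x : one ⟶ Z | ∃ (g : one ⟶ Z') (h : Z' ⟶ Z), x = g ≫ h} := by
    rw [← htr Z]
    exact Submodule.subset_span ⟨f, 𝟙 Z, by simp⟩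
  obtain ⟨u, hu⟩ := factor_of_span (k := k) f' (hZ'simple f' hf') hfmem
  -- f' factors through Z
  have hf'mem : f' ∈ Submodule.span k
      {x : one ⟶ Z' | ∃ (g : one ⟶ Z) (h : Z ⟶ Z'), x = g ≫ h} := by
    rw [htr Z']
    exact Submodule.subset_span ⟨f', 𝟙 Z', by simp⟩
  obtain ⟨v, hv⟩ := factor_of_span (k := k) f (hZsimple f hf) hf'mem
  have hw : f ≫ (v ≫ u) = f := by rw [← Category.assoc, ← hv, ← hu]
  set w : End Z := v ≫ u with hwdef
  rcases IsLocalRing.isUnit_or_isUnit_of_add_one (a := w) (b := 1 - w) (add_sub_cancel w 1) with hunit | hunit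
  · -- w is a unit: Z is a retract of Z'
    obtain ⟨t, ht⟩ : ∃ t : Z ⟶ Z, w ≫ t = 𝟙 Z := by
      refine ⟨hunit.unit.inv, ?_⟩
      have h2 := hunit.unit.inv_mul
      rw [hunit.unit_spec] at h2
      calc w ≫ hunit.unit.inv = hunit.unit.inv * w := (End.mul_def _ _).symm
        _ = 1 := h2
        _ = 𝟙 Z := End.one_def
    have hsr : v ≫ (u ≫ t) = 𝟙 Z := by rw [← Category.assoc]; exact ht
    set e : End Z' := (u ≫ t) ≫ v with hedef
    have hee : e * e = e := by
      show e ≫ e = e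
      calc ((u ≫ t) ≫ v) ≫ (u ≫ t) ≫ v = (u ≫ t) ≫ (v ≫ (u ≫ t)) ≫ v := by
            simp only [Category.assoc]
        _ = (u ≫ t) ≫ v := by rw [hsr]; simp
    rcases IsLocalRing.isUnit_or_isUnit_of_add_one (a := e) (b := 1 - e) (add_sub_cancel e 1) with he | he
    · have he1 : e = 1 :=
        he.mul_left_cancel (show e * e = e * 1 by rw [mul_one]; exact hee)
      have hrs : (u ≫ t) ≫ v = 𝟙 Z' := he1
      exact ⟨⟨v, u ≫ t, hsr, hrs⟩⟩
    · exfalso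
      have he0 : e = 0 := by
        have : (1 - e) * e = (1 - e) * 0 := by
          rw [sub_mul, one_mul, hee, sub_self, mul_zero]
        exact he.mul_left_cancel this
      have hid : 𝟙 Z = 0 := by
        have : (𝟙 Z : Z ⟶ Z) = v ≫ e ≫ (u ≫ t) := by
          rw [hedef]
          calc (𝟙 Z : Z ⟶ Z) = (v ≫ (u ≫ t)) ≫ (v ≫ (u ≫ t)) := by rw [hsr]; simp
            _ = v ≫ ((u ≫ t) ≫ v) ≫ u ≫ t := by simp only [Category.assoc]
        rw [this, he0]; simp
      exact hf (by rw [← Category.comp_id f, hid, Limits.comp_zero])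
  · -- 1 - w is a unit: contradiction with f ≠ 0
    exfalso
    obtain ⟨t, ht⟩ : ∃ t : Z ⟶ Z, ((1 : End Z) - w) ≫ t = 𝟙 Z := by
      refine ⟨hunit.unit.inv, ?_⟩
      have h2 := hunit.unit.inv_mul
      rw [hunit.unit_spec] at h2
      calc ((1 : End Z) - w) ≫ hunit.unit.inv = hunit.unit.inv * (1 - w) :=
            (End.mul_def _ _).symm
        _ = 1 := h2
        _ = 𝟙 Z := End.one_def
    have hfz : f ≫ ((1 : End Z) - w) = 0 := by
      rw [Preadditive.comp_sub, End.one_def, Category.comp_id, hw, sub_self]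
    have : f = 0 := by
      calc f = f ≫ 𝟙 Z := by simp
        _ = f ≫ (((1 : End Z) - w) ≫ t) := by rw [ht]
        _ = (f ≫ ((1 : End Z) - w)) ≫ t := by rw [Category.assoc]
        _ = 0 := by rw [hfz]; simp
    exact hf this
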